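/- Let f : [a,b] → ℝ be (l,L)-Lipschitzian, a = x₀ < ⋯ < xₙ = b a partition with hᵢ = x_{i+1} - xᵢ, ξᵢ ∈ [xᵢ, x_{i+1}], and Sᵢ = (f(x_{i+1}) - f(xᵢ))/hᵢ. Then |∫ₐᵇ f(t)dt - [(1/2)∑ᵢ f(ξᵢ)hᵢ + (1/2)∑ᵢ ((f(xᵢ)+f(x_{i+1}))/2)hᵢ - (l/2)∑ᵢ(ξᵢ - (xᵢ+x_{i+1})/2)hᵢ]| ≤ ∑ᵢ hᵢ[hᵢ/4 + |ξᵢ - (xᵢ+x_{i+1})/2|](Sᵢ - l). -/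

import Mathlib

open intervalIntegral MeasureTheory

lemma key (c d ξ : ℝ) (g : ℝ → ℝ) (hcd : c < d) (hξc : c ≤ ξ) (hξd : ξ ≤ d)
    (hmono : MonotoneOn g (Set.Icc c d)) :
    |(∫ t in c..d, g t) - (1/2 * g ξ * (d - c) + 1/4 * (g c + g d) * (d - c))| ≤
      ((d - c)/4 + |ξ - (c + d)/2|) * (g d - g c) := by
  have hsub1 : Set.Icc c ξ ⊆ Set.Icc c d := Set.Icc_subset_Icc le_rfl hξd
  have hsub2 : Set.Icc ξ d ⊆ Set.Icc c d := Set.Icc_subset_Icc hξc le_rfl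
  have hi1 : IntervalIntegrable g volume c ξ := by
    apply MonotoneOn.intervalIntegrable
    rw [Set.uIcc_of_le hξc]; exact hmono.mono hsub1
  have hi2 : IntervalIntegrable g volume ξ d := by
    apply MonotoneOn.intervalIntegrable
    rw [Set.uIcc_of_le hξd]; exact hmono.mono hsub2
  have hsplit : (∫ t in c..ξ, g t) + (∫ t in ξ..d, g t) = ∫ t in c..d, g t :=
    integral_add_adjacent_intervals hi1 hi2
  have hcm : c ∈ Set.Icc c d := ⟨le_rfl, hcd.le⟩
  have hdm : d ∈ Set.Icc c d := ⟨hcd.le, le_rfl⟩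
  have hξm : ξ ∈ Set.Icc c d := ⟨hξc, hξd⟩
  have h1 : g c ≤ g ξ := hmono hcm hξm hξc
  have h2 : g ξ ≤ g d := hmono hξm hdm hξd
  have hA1 : (∫ t in c..ξ, g t) ≤ g ξ * (ξ - c) := by
    have := integral_mono_on hξc hi1 (_root_.intervalIntegrable_const (c := g ξ))
      (fun t ht => hmono (hsub1 ht) hξm ht.2)
    simpa [mul_comm] using this
  have hA2 : g c * (ξ - c) ≤ (∫ t in c..ξ, g t) := by
    have := integral_mono_on hξc (_root_.intervalIntegrable_const (c := g c)) hi1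
      (fun t ht => hmono hcm (hsub1 ht) ht.1)
    simpa [mul_comm] using this
  have hB1 : (∫ t in ξ..d, g t) ≤ g d * (d - ξ) := by
    have := integral_mono_on hξd hi2 (_root_.intervalIntegrable_const (c := g d))
      (fun t ht => hmono (hsub2 ht) hdm ht.2)
    simpa [mul_comm] using this
  have hB2 : g ξ * (d - ξ) ≤ (∫ t in ξ..d, g t) := by
    have := integral_mono_on hξd (_root_.intervalIntegrable_const (c := g ξ)) hi2
      (fun t ht => hmono hξm (hsub2 ht) ht.1)
    simpa [mul_comm] using this
  rw [abs_le]
  rcases le_total ξ ((c + d)/2) with hle | hle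
  · rw [abs_of_nonpos (by linarith)]
    constructor <;> nlinarith [mul_nonneg (sub_nonneg.2 h1) (sub_nonneg.2 hle),
      mul_nonneg (sub_nonneg.2 h2) (sub_nonneg.2 hle),
      mul_nonneg (sub_nonneg.2 (h1.trans h2)) (sub_nonneg.2 hle)]
  · rw [abs_of_nonneg (by linarith)]
    constructor <;> nlinarith [mul_nonneg (sub_nonneg.2 h1) (sub_nonneg.2 hle),
      mul_nonneg (sub_nonneg.2 h2) (sub_nonneg.2 hle),
      mul_nonneg (sub_nonneg.2 (h1.trans h2)) (sub_nonneg.2 hle)]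

theorem stmt_15 (a b l L : ℝ) (f : ℝ → ℝ) (hab : a < b) (hlL : l < L)
    (hf : ∀ x₁ x₂, a ≤ x₁ → x₁ ≤ x₂ → x₂ ≤ b →
      l * (x₂ - x₁) ≤ f x₂ - f x₁ ∧ f x₂ - f x₁ ≤ L * (x₂ - x₁))
    (hint : IntervalIntegrable f MeasureTheory.volume a b)
    (n : ℕ) (hn : 0 < n) (x : ℕ → ℝ) (ξ : ℕ → ℝ)
    (hx0 : x 0 = a) (hxn : x n = b)
    (hmono : ∀ i < n, x i < x (i + 1))
    (hξ : ∀ i < n, ξ i ∈ Set.Icc (x i) (x (i + 1))) :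
    |(∫ t in a..b, f t) -
        (1 / 2 * ∑ i ∈ Finset.range n, f (ξ i) * (x (i + 1) - x i)
          + 1 / 2 * ∑ i ∈ Finset.range n, (f (x i) + f (x (i + 1))) / 2 * (x (i + 1) - x i)
          - l / 2 * ∑ i ∈ Finset.range n,
              (ξ i - (x i + x (i + 1)) / 2) * (x (i + 1) - x i))| ≤
      ∑ i ∈ Finset.range n,
        (x (i + 1) - x i) * ((x (i + 1) - x i) / 4 + |ξ i - (x i + x (i + 1)) / 2|)
          * ((f (x (i + 1)) - f (x i)) / (x (i + 1) - x i) - l) := by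
  set g : ℝ → ℝ := fun t => f t - l * t with hgdef
  -- monotonicity of the partition
  have hxm : ∀ i j, i ≤ j → j ≤ n → x i ≤ x j := by
    intro i j hij hjn
    induction j with
    | zero => simp [Nat.le_zero.mp hij]
    | succ k ih =>
      rcases Nat.lt_or_ge i (k + 1) with h | h
      · exact (ih (by omega) (by omega)).trans (hmono k (by omega)).le
      · have : i = k + 1 := by omega
        subst this; exact le_rfl
  have hgmono : MonotoneOn g (Set.Icc a b) := by
    intro u hu v hv huv
    have := (hf u v hu.1 huv hv.2).1
    simp only [hgdef]
    linarith
  have hgi : ∀ i < n, MonotoneOn g (Set.Icc (x i) (x (i + 1))) := by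
    intro i hi
    apply hgmono.mono
    apply Set.Icc_subset_Icc
    · rw [← hx0]; exact hxm 0 i (Nat.zero_le _) (by omega)
    · rw [← hxn]; exact hxm (i + 1) n (by omega) le_rfl
  have hgint : ∀ i < n, IntervalIntegrable g volume (x i) (x (i + 1)) := by
    intro i hi
    apply MonotoneOn.intervalIntegrable
    rw [Set.uIcc_of_le (hmono i hi).le]
    exact hgi i hi
  have hfint : ∀ i < n, IntervalIntegrable f volume (x i) (x (i + 1)) := by
    intro i hi
    have hl : IntervalIntegrable (fun t => l * t) volume (x i) (x (i + 1)) :=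
      (continuous_const.mul continuous_id).intervalIntegrable _ _
    have := (hgint i hi).add hl
    have heq : (fun t => g t + l * t) = f := by funext t; simp [hgdef]
    rwa [heq] at this
  -- per-interval bound
  have hkey : ∀ i ∈ Finset.range n,
      |(∫ t in x i..x (i + 1), f t) -
        (1 / 2 * (f (ξ i) * (x (i + 1) - x i))
          + 1 / 2 * ((f (x i) + f (x (i + 1))) / 2 * (x (i + 1) - x i))
          - l / 2 * ((ξ i - (x i + x (i + 1)) / 2) * (x (i + 1) - x i)))| ≤
      (x (i + 1) - x i) * ((x (i + 1) - x i) / 4 + |ξ i - (x i + x (i + 1)) / 2|)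
          * ((f (x (i + 1)) - f (x i)) / (x (i + 1) - x i) - l) := by
    intro i hi
    rw [Finset.mem_range] at hi
    set c := x i
    set d := x (i + 1)
    have hcd : c < d := hmono i hi
    have hh : d - c ≠ 0 := sub_ne_zero.2 hcd.ne'
    have hk := key c d (ξ i) g hcd (hξ i hi).1 (hξ i hi).2 (hgi i hi)
    have hl : IntervalIntegrable (fun t => l * t) volume c d :=
      (continuous_const.mul continuous_id).intervalIntegrable _ _
    have hif : (∫ t in c..d, f t) = (∫ t in c..d, g t) + l * ((d ^ 2 - c ^ 2) / 2) := by
      have heq : (fun t => g t + l * t) = f := by funext t; simp [hgdef]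
      rw [← heq, integral_add (hgint i hi) hl, intervalIntegral.integral_const_mul, integral_id]
    have hexpr : (∫ t in c..d, f t) -
        (1 / 2 * (f (ξ i) * (d - c)) + 1 / 2 * ((f c + f d) / 2 * (d - c))
          - l / 2 * ((ξ i - (c + d) / 2) * (d - c))) =
        (∫ t in c..d, g t) - (1/2 * g (ξ i) * (d - c) + 1/4 * (g c + g d) * (d - c)) := by
      rw [hif]; simp only [hgdef]; ring
    have hrhs : ((d - c)/4 + |ξ i - (c + d)/2|) * (g d - g c) =
        (d - c) * ((d - c) / 4 + |ξ i - (c + d) / 2|) * ((f d - f c) / (d - c) - l) := by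
      simp only [hgdef]
      field_simp
      ring
    rw [hexpr, ← hrhs]
    exact hk
  -- split the integral
  have hsum : (∫ t in a..b, f t) = ∑ i ∈ Finset.range n, ∫ t in x i..x (i + 1), f t := by
    rw [← hx0, ← hxn]
    exact (sum_integral_adjacent_intervals (fun i hi => hfint i hi)).symm
  rw [hsum, Finset.mul_sum, Finset.mul_sum, Finset.mul_sum, ← Finset.sum_add_distrib,
    ← Finset.sum_sub_distrib, ← Finset.sum_sub_distrib]
  exact (Finset.abs_sum_le_sum_abs _ _).trans (Finset.sum_le_sum hkey)
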